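/- Let k be a field of characteristic different from 2, let m ≥ 2, and let V be a 2m-dimensional k-vector space equipped with a nondegenerate symmetric bilinear form B. Let x, y, z be linear automorphisms of V of determinant 1 that preserve B (that is, B(g u, g v) = B(u, v) for all u, v ∈ V and g ∈ {x, y, z}), so that x, y, z lie in the special orthogonal group SO(V, B) ≅ SO_{2m}(k). Assume: x is an involution (x² = 1 and x ≠ 1); y is unipotent with quadratic minimal polynomial ((y − 1)² = 0 and y ≠ 1); and z is regular unipotent, i.e. z − 1 is nilpotent and (z − 1)^(2m−2) ≠ 0 (for an element of SO(V, B) this says that z has Jordan type (2m−1, 1)). Then x · y · z ≠ 1. -/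

import Mathlib

/-- Lemma (Guralnick–Malle, Lemma `so`): in `SO_{2m}(k)`, `char k ≠ 2`, `m ≥ 2`,
an involution `x`, a quadratic unipotent `y` and a regular unipotent `z`
never satisfy `x * y * z = 1`. -/
theorem stmt_1 (k : Type*) [Field k] (hchar : ringChar k ≠ 2)
    (m : ℕ) (hm : 2 ≤ m)
    (V : Type*) [AddCommGroup V] [Module k V] [FiniteDimensional k V]
    (hdim : Module.finrank k V = 2 * m)
    (B : LinearMap.BilinForm k V)
    (hBsymm : ∀ u v : V, B u v = B v u)
    (hBnd : B.Nondegenerate)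
    (x y z : Module.End k V)
    (hxu : IsUnit x) (hyu : IsUnit y) (hzu : IsUnit z)
    (hxdet : LinearMap.det x = 1) (hydet : LinearMap.det y = 1)
    (hzdet : LinearMap.det z = 1)
    (hxB : ∀ u v : V, B (x u) (x v) = B u v)
    (hyB : ∀ u v : V, B (y u) (y v) = B u v)
    (hzB : ∀ u v : V, B (z u) (z v) = B u v)
    (hx2 : x ^ 2 = 1) (hx1 : x ≠ 1)
    (hy2 : (y - 1) ^ 2 = 0) (hy1 : y ≠ 1)
    (hznil : IsNilpotent (z - 1)) (hzreg : (z - 1) ^ (2 * m - 2) ≠ 0) :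
    x * y * z ≠ 1 := by
  intro hxyz
  classical
  have h2k : (2 : k) ≠ 0 := Ring.two_ne_zero hchar
  set N : Module.End k V := z - 1 with hN
  set u : Module.End k V := y - 1 with hu
  have hy' : y = 1 + u := by rw [hu]; abel
  have hz' : z = 1 + N := by rw [hN]; abel
  -- x = y * z
  have hxe : x = y * z := by
    calc x = x * (x * y * z) := by rw [hxyz, mul_one]
    _ = x ^ 2 * (y * z) := by rw [sq]; noncomm_ring
    _ = y * z := by rw [hx2, one_mul]
  have h4 : (y * z) * (y * z) = 1 := by rw [← hxe, ← sq, hx2]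
  have h5 : (1 - u) * y = 1 := by
    have h : (1 - u) * y = 1 - (y - 1) ^ 2 := by rw [hu]; noncomm_ring
    rw [h, hy2, sub_zero]
  have hzyz : z * y * z = 1 - u := by
    calc z * y * z = ((1 - u) * y) * (z * y * z) := by rw [h5, one_mul]
    _ = (1 - u) * ((y * z) * (y * z)) := by noncomm_ring
    _ = 1 - u := by rw [h4, mul_one]
  have hE : 2 * N + N ^ 2 + 2 * u + N * u + u * N + N * u * N = 0 := by
    have h : 2 * N + N ^ 2 + 2 * u + N * u + u * N + N * u * N
        = (1 + N) * (1 + u) * (1 + N) - (1 - u) := by noncomm_ring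
    rw [h, ← hy', ← hz', hzyz, sub_self]
  -- rank lemma
  have hL : ∀ i : ℕ, N ^ i ≠ 0 →
      i + Module.finrank k (LinearMap.range (N ^ i)) ≤ 2 * m := by
    intro i
    induction i with
    | zero =>
      intro _
      have := Submodule.finrank_le (LinearMap.range (N ^ 0))
      omega
    | succ i ih =>
      intro hne
      have hne' : N ^ i ≠ 0 := by
        intro h; exact hne (by rw [pow_succ, h, zero_mul])
      have hle : LinearMap.range (N ^ (i + 1)) ≤ LinearMap.range (N ^ i) := by
        rintro v ⟨a, rfl⟩
        exact ⟨N a, by rw [pow_succ, Module.End.mul_apply]⟩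
      have hlt : LinearMap.range (N ^ (i + 1)) < LinearMap.range (N ^ i) := by
        rcases lt_or_eq_of_le hle with h | h
        · exact h
        · exfalso
          have hstab : ∀ t : ℕ, LinearMap.range (N ^ (i + t)) = LinearMap.range (N ^ i) := by
            intro t
            induction t with
            | zero => rfl
            | succ t iht =>
              have e1 : N ^ (i + (t + 1)) = N * N ^ (i + t) := by
                rw [← pow_succ']
                ring_nf
              calc LinearMap.range (N ^ (i + (t + 1)))
                  = Submodule.map N (LinearMap.range (N ^ (i + t))) := by
                    rw [e1, Module.End.mul_eq_comp, LinearMap.range_comp]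
                _ = Submodule.map N (LinearMap.range (N ^ i)) := by rw [iht]
                _ = LinearMap.range (N ^ (i + 1)) := by
                    rw [pow_succ', Module.End.mul_eq_comp, LinearMap.range_comp]
                _ = LinearMap.range (N ^ i) := h
          obtain ⟨s, hs⟩ := hznil
          have h0 : N ^ (i + s) = 0 := by rw [pow_add, hs, mul_zero]
          have h1 := hstab s
          rw [h0] at h1
          have h2 : LinearMap.range (N ^ i) = ⊥ := by
            rw [← h1]; exact LinearMap.range_zero
          exact hne' (LinearMap.range_eq_bot.mp h2)
      have hfr := Submodule.finrank_lt_finrank_of_lt hlt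
      have := ih hne'
      omega
  have hN2m : N ^ (2 * m) = 0 := by
    by_contra h
    have h1 := hL (2 * m) h
    have h0 : Module.finrank k (LinearMap.range (N ^ (2 * m))) = 0 := by omega
    exact h (LinearMap.range_eq_bot.mp (Submodule.finrank_eq_zero.mp h0))
  -- N ^ (2m - 1) = 0
  have hNo : N ^ (2 * m - 1) = 0 := by
    by_contra hj
    set j := 2 * m - 1 with hjdef
    have hr1 : Module.finrank k (LinearMap.range (N ^ j)) ≤ 1 := by
      have := hL j hj; omega
    obtain ⟨zu, hzuspec⟩ := hzu
    set w : Module.End k V := ↑zu⁻¹ with hw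
    have hwz : w * z = 1 := by rw [hw, ← hzuspec]; exact zu.inv_mul
    have hzw : z * w = 1 := by rw [hw, ← hzuspec]; exact zu.mul_inv
    have h1 : ∀ a b : V, B (z a) b = B a (w b) := by
      intro a b
      have e : z (w b) = b := by
        rw [← Module.End.mul_apply, hzw, Module.End.one_apply]
      calc B (z a) b = B (z a) (z (w b)) := by rw [e]
      _ = B a (w b) := hzB a (w b)
    have hMstep : ∀ a b : V, B (N a) b = B a ((w - 1) b) := by
      intro a b
      have e1 : N a = z a - a := by
        rw [hN]; simp [LinearMap.sub_apply]
      have e2 : (w - 1) b = w b - b := by simp [LinearMap.sub_apply]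
      rw [e1, e2, map_sub, LinearMap.sub_apply, map_sub, h1]
    have hpow : ∀ (i : ℕ) (a b : V), B ((N ^ i) a) b = B a (((w - 1) ^ i) b) := by
      intro i
      induction i with
      | zero => intro a b; simp
      | succ i ih =>
        intro a b
        have e : (N ^ (i + 1)) a = (N ^ i) (N a) := by
          rw [pow_succ, Module.End.mul_apply]
        rw [e, ih (N a) b, hMstep]
        congr 1
        rw [pow_succ', Module.End.mul_apply]
    have hjsucc : j + 1 = 2 * m := by omega
    have hNj1 : N ^ (j + 1) = 0 := by rw [hjsucc, hN2m]
    have hz1 : z * N ^ j = N ^ j := by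
      rw [hz', add_mul, one_mul, ← pow_succ', hNj1, add_zero]
    have hwNj : w * N ^ j = N ^ j := by
      calc w * N ^ j = w * (z * N ^ j) := by rw [hz1]
      _ = (w * z) * N ^ j := by rw [mul_assoc]
      _ = N ^ j := by rw [hwz, one_mul]
    have hwpow : ∀ t : ℕ, w ^ t * N ^ j = N ^ j := by
      intro t
      induction t with
      | zero => rw [pow_zero, one_mul]
      | succ t iht =>
        rw [pow_succ', mul_assoc, iht, hwNj]
    have hcwN : Commute w N := by
      have e1 : w * N = 1 - w := by rw [hN, mul_sub, hwz, mul_one]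
      have e2 : N * w = 1 - w := by rw [hN, sub_mul, hzw, one_mul]
      rw [Commute, SemiconjBy, e1, e2]
    have hwj : (w - 1) ^ j = -(N ^ j) := by
      have e1 : w - 1 = -(w * N) := by
        rw [hN, mul_sub, hwz, mul_one, neg_sub]
      have hoj : Odd j := ⟨m - 1, by omega⟩
      rw [e1, hoj.neg_pow, hcwN.mul_pow, hwpow j]
    have halt : ∀ a : V, B ((N ^ j) a) a = 0 := by
      intro a
      have h1 := hpow j a a
      rw [hwj] at h1
      have h2 : B a ((-(N ^ j)) a) = - B a ((N ^ j) a) := by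
        rw [LinearMap.neg_apply, map_neg]
      rw [h2, hBsymm a ((N ^ j) a)] at h1
      have h3 : (2 : k) * B ((N ^ j) a) a = 0 := by
        rw [two_mul]
        nth_rewrite 1 [h1]
        ring
      rcases mul_eq_zero.mp h3 with h | h
      · exact absurd h h2k
      · exact h
    obtain ⟨a0, ha0⟩ : ∃ a : V, (N ^ j) a ≠ 0 := by
      by_contra h
      push_neg at h
      exact hj (LinearMap.ext (by simpa using h))
    set e := (N ^ j) a0 with he
    have hespan : Submodule.span k {e} = LinearMap.range (N ^ j) := by
      apply Submodule.eq_of_le_of_finrank_le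
      · rw [Submodule.span_le, Set.singleton_subset_iff]
        exact ⟨a0, rfl⟩
      · rw [finrank_span_singleton ha0]
        exact hr1
    obtain ⟨b0, hb0⟩ : ∃ b : V, B e b ≠ 0 := by
      by_contra h
      push_neg at h
      exact ha0 (hBnd.1 e h)
    obtain ⟨c, hc⟩ : ∃ c : k, (N ^ j) b0 = c • e := by
      have hmem : (N ^ j) b0 ∈ Submodule.span k {e} := by
        rw [hespan]; exact ⟨b0, rfl⟩
      obtain ⟨c, hc⟩ := Submodule.mem_span_singleton.mp hmem
      exact ⟨c, hc.symm⟩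
    have hc0 : c = 0 := by
      have h := halt b0
      rw [hc, map_smul, LinearMap.smul_apply, smul_eq_mul] at h
      rcases mul_eq_zero.mp h with h | h
      · exact h
      · exact absurd h hb0
    have h6 := halt (a0 + b0)
    have h7 : (N ^ j) (a0 + b0) = e := by
      rw [map_add, hc, hc0, zero_smul, add_zero, he]
    rw [h7, map_add] at h6
    have h8 : B e a0 = 0 := halt a0
    rw [h8, zero_add] at h6
    exact hb0 h6
  -- algebraic endgame
  have h2R : IsUnit ((2 : Module.End k V) + N) := by
    have h2unit : IsUnit (2 : Module.End k V) := by
      have h := (isUnit_iff_ne_zero.mpr h2k).map (algebraMap k (Module.End k V))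
      rwa [map_ofNat] at h
    exact hznil.isUnit_add_left_of_commute h2unit (Commute.ofNat_right N 2)
  obtain ⟨U, hU⟩ := h2R
  set W : Module.End k V := ↑U⁻¹ with hWdef
  have hW1 : ((2 : Module.End k V) + N) * W = 1 := by rw [hWdef, ← hU]; exact U.mul_inv
  have hW2 : W * ((2 : Module.End k V) + N) = 1 := by rw [hWdef, ← hU]; exact U.inv_mul
  have hWN : W * N = N * W := by
    have hcn : ((2 : Module.End k V) + N) * N = N * ((2 : Module.End k V) + N) := by
      noncomm_ring
    calc W * N = W * N * (((2 : Module.End k V) + N) * W) := by rw [hW1, mul_one]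
    _ = W * (N * ((2 : Module.End k V) + N)) * W := by noncomm_ring
    _ = W * (((2 : Module.End k V) + N) * N) * W := by rw [hcn]
    _ = (W * ((2 : Module.End k V) + N)) * (N * W) := by noncomm_ring
    _ = N * W := by rw [hW2, one_mul]
  obtain ⟨snil, hsnil⟩ := hznil
  have key : ∀ t i : ℕ, i + t = 2 * m - 1 →
      ∃ c : Module.End k V, N * c = c * N ∧ IsUnit c ∧ N ^ i * u = -(N ^ (i + 1) * c) := by
    intro t
    induction t with
    | zero =>
      intro i hi
      refine ⟨1, by rw [mul_one, one_mul], isUnit_one, ?_⟩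
      have hi' : i = 2 * m - 1 := by omega
      have hi1 : N ^ i = 0 := by rw [hi', hNo]
      have hi2 : N ^ (i + 1) = 0 := by
        rw [pow_succ, hi1, zero_mul]
      rw [hi1, hi2, zero_mul, zero_mul, neg_zero]
    | succ t ih =>
      intro i hi
      obtain ⟨c, hcN, hcu, hceq⟩ := ih (i + 1) (by omega)
      -- rewrite in terms of A = N ^ i
      have e1 : N ^ (i + 1) = N ^ i * N := pow_succ N i
      have e2 : N ^ (i + 1 + 1) = N ^ i * N * N := by rw [pow_succ, pow_succ]
      rw [e1, e2] at hceq
      have main : N ^ i * u * (2 + N) =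
          -(N ^ i * N * u * (1 + N) + 2 * (N ^ i * N) + N ^ i * N * N) := by
        have idt : N ^ i * u * (2 + N) + (N ^ i * N * u * (1 + N) + 2 * (N ^ i * N) + N ^ i * N * N)
            = N ^ i * (2 * N + N ^ 2 + 2 * u + N * u + u * N + N * u * N) := by
          noncomm_ring
        have h0 : N ^ i * (2 * N + N ^ 2 + 2 * u + N * u + u * N + N * u * N) = 0 := by
          rw [hE, mul_zero]
        rw [h0] at idt
        exact eq_neg_of_add_eq_zero_left idt
      rw [hceq] at main
      have main2 : N ^ i * u * (2 + N) = -(N ^ i * N * ((2 + N) - N * (c * (1 + N)))) := by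
        rw [main]; noncomm_ring
      set g : Module.End k V := c * (1 + N) * W with hg
      have hgN : N * g = g * N := by
        calc N * g = (N * c) * (1 + N) * W := by rw [hg]; noncomm_ring
        _ = (c * N) * (1 + N) * W := by rw [hcN]
        _ = c * ((N * (1 + N)) * W) := by noncomm_ring
        _ = c * (((1 + N) * N) * W) := by rw [show N * (1 + N) = (1 + N) * N by noncomm_ring]
        _ = c * (1 + N) * (N * W) := by noncomm_ring
        _ = c * (1 + N) * (W * N) := by rw [hWN]
        _ = g * N := by rw [hg]; noncomm_ring
      have hgnil : IsNilpotent (N * g) := by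
        refine ⟨snil, ?_⟩
        have : Commute N g := hgN
        rw [this.mul_pow, hsnil, zero_mul]
      have hexp : (2 + N - N * (c * (1 + N))) * W = 1 - N * g := by
        rw [sub_mul, hW1, hg]
        congr 1
      refine ⟨(2 + N - N * (c * (1 + N))) * W, ?_, ?_, ?_⟩
      · rw [hexp]
        have hcg : Commute N g := hgN
        exact ((Commute.one_right N).sub_right ((Commute.refl N).mul_right hcg)).eq
      · rw [hexp]
        exact hgnil.isUnit_one_sub
      · have step1 : N ^ i * u = N ^ i * u * (2 + N) * W := by
          rw [mul_assoc, hW1, mul_one]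
        rw [e1, step1, main2]
        simp only [neg_mul, mul_assoc]
  obtain ⟨c, hcN, hcu, hceq⟩ := key (2 * m - 1) 0 (by omega)
  rw [pow_zero, one_mul, zero_add, pow_one] at hceq
  have hu2 : u ^ 2 = 0 := by rw [hu]; exact hy2
  have hNc : N ^ 2 * c ^ 2 = 0 := by
    have h : u ^ 2 = N ^ 2 * c ^ 2 := by
      rw [hceq]
      calc (-(N * c)) ^ 2 = (N * c) * (N * c) := by rw [neg_sq, sq]
      _ = N * (c * N) * c := by noncomm_ring
      _ = N * (N * c) * c := by rw [← hcN]
      _ = N ^ 2 * c ^ 2 := by noncomm_ring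
    rw [← h, hu2]
  have hNN : (N : Module.End k V) ^ 2 = 0 := by
    have hcu2 : IsUnit (c ^ 2) := hcu.pow 2
    obtain ⟨d, hd⟩ := hcu2
    calc N ^ 2 = N ^ 2 * (c ^ 2 * ↑d⁻¹) := by rw [← hd, Units.mul_inv, mul_one]
    _ = (N ^ 2 * c ^ 2) * ↑d⁻¹ := by rw [mul_assoc]
    _ = 0 := by rw [hNc, zero_mul]
  apply hzreg
  have hsplit : 2 * m - 2 = 2 + (2 * m - 4) := by omega
  rw [hsplit, pow_add, hNN, zero_mul]
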